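/- Setting σ = a_1 + ⋯ + a_r, for every natural number n one has (r−1)! · p_a(n) = Σ_{j = ⌈(n+σ)/D⌉ − r}^{⌊n/D⌋} (j+1)(j+2)⋯(j+r−1) · f_a(n − jD), where the sum is over all integers j in the indicated (possibly partly negative) range; note that n − jD ≥ 0 for every such j. -/

import Mathlib

open Finset

/-- The restricted partition function: the number of solutions `x : Fin r → ℕ`
of `∑ i, a i * x i = n`. -/
noncomputable def restrictedPartition {r : ℕ} (a : Fin r → ℕ) (n : ℕ) : ℕ :=
  Nat.card {x : Fin r → ℕ // ∑ i, a i * x i = n}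

/-- `f_a(n)`: the number of tuples `j` with `0 ≤ j k ≤ D / a k - 1` for all `k`
and `∑ k, a k * j k = n`. -/
noncomputable def fa {r : ℕ} (a : Fin r → ℕ) (D n : ℕ) : ℕ :=
  Nat.card {j : Fin r → ℕ // (∀ k, j k ≤ D / a k - 1) ∧ ∑ k, a k * j k = n}


lemma card_subtype_of_finset {α : Type*} (s : Finset α) (P : α → Prop)
    (h : ∀ x, P x ↔ x ∈ s) : Nat.card {x // P x} = s.card := by
  rw [Nat.card_congr (Equiv.subtypeEquivRight h), Nat.card_eq_finsetCard]

lemma hockey (d : ℕ) (m : ℕ) :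
    ∑ t ∈ range (m + 1), (t + d).choose d = (m + d + 1).choose (d + 1) := by
  induction m with
  | zero => simp
  | succ m ih =>
    rw [Finset.sum_range_succ, ih, show m + 1 + d = m + d + 1 from by omega,
      Nat.choose_succ_succ' (m + d + 1) d]
    omega

lemma prodIcc (k : ℕ) (m : ℕ) :
    ∏ ℓ ∈ Icc 1 k, (m + ℓ) = k.factorial * (m + k).choose k := by
  induction k with
  | zero => simp
  | succ k ih =>
    rw [Finset.prod_Icc_succ_top (by omega : 1 ≤ k + 1), ih, Nat.factorial_succ]
    have h := Nat.add_one_mul_choose_eq (m + k) k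
    calc k.factorial * (m + k).choose k * (m + (k + 1))
        = k.factorial * ((m + k + 1) * (m + k).choose k) := by ring
      _ = k.factorial * ((m + k + 1).choose (k + 1) * (k + 1)) := by rw [h]
      _ = (k + 1) * k.factorial * (m + (k + 1)).choose (k + 1) := by ring_nf

lemma finAnti_card_rec (d m : ℕ) :
    (Finset.finAntidiagonal (d + 1) (m : ℕ)).card
      = ∑ t ∈ range (m + 1), (Finset.finAntidiagonal d (m - t)).card := by
  classical
  have hset : Finset.finAntidiagonal (d + 1) (m : ℕ)
      = (range (m + 1)).biUnion (fun t =>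
          (Finset.finAntidiagonal d (m - t)).map
            ⟨Fin.cons t, Fin.cons_right_injective (α := fun _ => ℕ) t⟩) := by
    ext f
    simp only [Finset.mem_finAntidiagonal, Finset.mem_biUnion, Finset.mem_map,
      Finset.mem_range, Function.Embedding.coeFn_mk, Fin.sum_univ_succ]
    constructor
    · intro hsum
      refine ⟨f 0, by omega, Fin.tail f, ?_, Fin.cons_self_tail f⟩
      have : ∑ i, Fin.tail f i = ∑ i : Fin d, f i.succ := rfl
      omega
    · rintro ⟨t, ht, g, hg, rfl⟩
      simp only [Fin.cons_zero, Fin.cons_succ]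
      omega
  rw [hset, Finset.card_biUnion]
  · exact Finset.sum_congr rfl fun t _ => Finset.card_map _
  · intro t _ t' _ htt'
    rw [Function.onFun, Finset.disjoint_left]
    rintro p hp hp'
    simp only [Finset.mem_map, Function.Embedding.coeFn_mk] at hp hp'
    obtain ⟨g, -, rfl⟩ := hp
    obtain ⟨g', -, he⟩ := hp'
    have h0 := congrFun he 0
    simp only [Fin.cons_zero] at h0
    exact htt' h0.symm

lemma cardFA (d : ℕ) : ∀ m : ℕ, (Finset.finAntidiagonal (d + 1) (m : ℕ)).card
    = (m + d).choose d := by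
  induction d with
  | zero =>
    intro m
    have : Finset.finAntidiagonal 1 (m : ℕ) = {fun _ => m} := by
      ext f
      simp only [Finset.mem_finAntidiagonal, Fin.sum_univ_one, Finset.mem_singleton]
      constructor
      · intro h; funext i; rw [Subsingleton.elim i 0]; exact h
      · intro h; rw [h]
    simp [this]
  | succ d ih =>
    intro m
    rw [finAnti_card_rec]
    have h1 : ∀ t ∈ range (m + 1), (Finset.finAntidiagonal (d + 1) (m - t)).card
        = ((m - t) + d).choose d := fun t _ => ih (m - t)
    rw [Finset.sum_congr rfl h1]
    have h2 : ∀ t ∈ range (m + 1), ((m - t) + d).choose d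
        = (fun j => (j + d).choose d) (m + 1 - 1 - t) := by
      intro t ht
      simp only [Finset.mem_range] at ht
      show _ = (m + 1 - 1 - t + d).choose d
      have he : m + 1 - 1 - t = m - t := by omega
      rw [he]
    calc ∑ t ∈ range (m + 1), (m - t + d).choose d
        = ∑ t ∈ range (m + 1), (fun j => (j + d).choose d) (m + 1 - 1 - t) :=
          Finset.sum_congr rfl h2
      _ = ∑ t ∈ range (m + 1), (fun j => (j + d).choose d) t :=
          Finset.sum_range_reflect (fun j => (j + d).choose d) (m + 1)
      _ = (m + d + 1).choose (d + 1) := hockey d m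

lemma key_count {r : ℕ} (a : Fin r → ℕ) (ha : ∀ i, 0 < a i) (D : ℕ) (hD : 0 < D)
    (hdvd : ∀ i, a i ∣ D) (n : ℕ) :
    restrictedPartition a n =
      ∑ m ∈ range (n / D + 1),
        fa a D (n - m * D) * (Finset.finAntidiagonal r m).card := by
  classical
  have hq0 : ∀ i, 0 < D / a i := fun i => Nat.div_pos (Nat.le_of_dvd hD (hdvd i)) (ha i)
  have haq : ∀ i, a i * (D / a i) = D := fun i => Nat.mul_div_cancel' (hdvd i)
  set S : Finset (Fin r → ℕ) :=
    Finset.filter (fun x => ∑ i, a i * x i = n) (Fintype.piFinset fun _ => range (n + 1)) with hS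
  set F : ℕ → Finset (Fin r → ℕ) := fun N =>
    Finset.filter (fun j => (∀ k, j k ≤ D / a k - 1) ∧ ∑ k, a k * j k = N)
      (Fintype.piFinset fun k => range (D / a k)) with hF
  have hmemS : ∀ x : Fin r → ℕ, x ∈ S ↔ ∑ i, a i * x i = n := by
    intro x
    simp only [hS, Finset.mem_filter, Fintype.mem_piFinset, Finset.mem_range]
    constructor
    · exact fun h => h.2
    · intro hx
      refine ⟨fun i => Nat.lt_succ_of_le ?_, hx⟩
      calc x i ≤ a i * x i := Nat.le_mul_of_pos_left _ (ha i)
        _ ≤ ∑ i, a i * x i := Finset.single_le_sum (f := fun i => a i * x i)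
            (fun i _ => Nat.zero_le _) (Finset.mem_univ i)
        _ = n := hx
  have hmemF : ∀ (N : ℕ) (j : Fin r → ℕ),
      j ∈ F N ↔ (∀ k, j k ≤ D / a k - 1) ∧ ∑ k, a k * j k = N := by
    intro N j
    simp only [hF, Finset.mem_filter, Fintype.mem_piFinset, Finset.mem_range]
    constructor
    · exact fun h => h.2
    · intro hj
      refine ⟨fun k => ?_, hj⟩
      have h1 := hj.1 k
      have h2 := hq0 k
      omega
  have hScard : restrictedPartition a n = S.card :=
    card_subtype_of_finset S _ (fun x => (hmemS x).symm)
  have hFcard : ∀ N, fa a D N = (F N).card := fun N =>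
    card_subtype_of_finset (F N) _ (fun j => (hmemF N j).symm)
  have key : ∀ x : Fin r → ℕ,
      ∑ i, a i * x i = D * (∑ i, x i / (D / a i)) + ∑ i, a i * (x i % (D / a i)) := by
    intro x
    rw [Finset.mul_sum, ← Finset.sum_add_distrib]
    refine Finset.sum_congr rfl fun i _ => ?_
    calc a i * x i
        = a i * ((D / a i) * (x i / (D / a i)) + x i % (D / a i)) := by
          rw [Nat.div_add_mod]
      _ = (a i * (D / a i)) * (x i / (D / a i)) + a i * (x i % (D / a i)) := by ring
      _ = D * (x i / (D / a i)) + a i * (x i % (D / a i)) := by rw [haq i]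
  have hbij : S.card = ((range (n / D + 1)).biUnion
      (fun m => F (n - m * D) ×ˢ Finset.finAntidiagonal r m)).card := by
    apply Finset.card_nbij' (fun x => (fun i => x i % (D / a i), fun i => x i / (D / a i)))
      (fun p => fun i => p.1 i + (D / a i) * p.2 i)
    · intro x hx
      rw [Finset.mem_coe, hmemS] at hx
      rw [Finset.mem_coe, Finset.mem_biUnion]
      have hkey := key x
      set m := ∑ i, x i / (D / a i) with hm
      have hDm : D * m = m * D := Nat.mul_comm _ _
      refine ⟨m, ?_, ?_⟩
      · rw [Finset.mem_range]
        have h1 : m * D ≤ n := by omega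
        have h2 := (Nat.le_div_iff_mul_le hD).2 h1
        omega
      · rw [Finset.mem_product]
        constructor
        · rw [hmemF]
          refine ⟨fun k => ?_, ?_⟩
          · show x k % (D / a k) ≤ D / a k - 1
            have := Nat.mod_lt (x k) (hq0 k)
            omega
          · show ∑ k, a k * (x k % (D / a k)) = n - m * D
            omega
        · rw [Finset.mem_finAntidiagonal]
    · intro p hp
      rw [Finset.mem_coe, Finset.mem_biUnion] at hp
      obtain ⟨m, hm, hpm⟩ := hp
      rw [Finset.mem_range] at hm
      rw [Finset.mem_product] at hpm
      obtain ⟨hp1, hp2⟩ := hpm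
      rw [hmemF] at hp1
      rw [Finset.mem_finAntidiagonal] at hp2
      rw [Finset.mem_coe, hmemS]
      show ∑ i, a i * (p.1 i + (D / a i) * p.2 i) = n
      have hsum : ∑ i, a i * (p.1 i + (D / a i) * p.2 i)
          = ∑ i, a i * p.1 i + D * ∑ i, p.2 i := by
        rw [Finset.mul_sum, ← Finset.sum_add_distrib]
        refine Finset.sum_congr rfl fun i _ => ?_
        calc a i * (p.1 i + (D / a i) * p.2 i)
            = a i * p.1 i + (a i * (D / a i)) * p.2 i := by ring
          _ = a i * p.1 i + D * p.2 i := by rw [haq i]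
      rw [hsum, hp1.2, hp2]
      have hDm : D * m = m * D := Nat.mul_comm _ _
      have hmD : m * D ≤ n := by
        have h1 := Nat.div_mul_le_self n D
        have h2 : m * D ≤ (n / D) * D := Nat.mul_le_mul_right D (by omega)
        omega
      omega
    · intro x hx
      funext i
      show x i % (D / a i) + (D / a i) * (x i / (D / a i)) = x i
      exact Nat.mod_add_div (x i) (D / a i)
    · intro p hp
      rw [Finset.mem_coe, Finset.mem_biUnion] at hp
      obtain ⟨m, hm, hpm⟩ := hp
      rw [Finset.mem_product] at hpm
      have hb := ((hmemF _ _).1 hpm.1).1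
      have hlt : ∀ i, p.1 i < D / a i := fun i => by have := hq0 i; have := hb i; omega
      have e1 : ∀ i, (p.1 i + (D / a i) * p.2 i) % (D / a i) = p.1 i := by
        intro i
        rw [Nat.add_mul_mod_self_left, Nat.mod_eq_of_lt (hlt i)]
      have e2 : ∀ i, (p.1 i + (D / a i) * p.2 i) / (D / a i) = p.2 i := by
        intro i
        rw [Nat.add_mul_div_left _ _ (hq0 i), Nat.div_eq_of_lt (hlt i), Nat.zero_add]
      exact Prod.ext (funext e1) (funext e2)
  have hdisj : ∀ m ∈ range (n / D + 1), ∀ m' ∈ range (n / D + 1), m ≠ m' →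
      Disjoint (F (n - m * D) ×ˢ Finset.finAntidiagonal r m)
        (F (n - m' * D) ×ˢ Finset.finAntidiagonal r m') := by
    intro m _ m' _ hmm'
    rw [Finset.disjoint_left]
    intro p hp hp'
    rw [Finset.mem_product] at hp hp'
    rw [Finset.mem_finAntidiagonal] at hp hp'
    exact hmm' (hp.2.symm.trans hp'.2)
  rw [hScard, hbij, Finset.card_biUnion hdisj]
  refine Finset.sum_congr rfl fun m hm => ?_
  rw [Finset.card_product, hFcard]

theorem stmt8 (r : ℕ) (hr : 1 ≤ r) (a : Fin r → ℕ) (ha : ∀ i, 0 < a i)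
    (D : ℕ) (hD : 0 < D) (hdvd : ∀ i, a i ∣ D)
    (σ : ℕ) (hσ : σ = ∑ i, a i) :
    ∀ n : ℕ,
      (∀ j ∈ Finset.Icc (⌈((n + σ : ℕ) : ℚ) / (D : ℚ)⌉ - r) ((n / D : ℕ) : ℤ),
        0 ≤ (n : ℤ) - j * D) ∧
      ((r - 1).factorial * restrictedPartition a n : ℤ) =
        ∑ j ∈ Finset.Icc (⌈((n + σ : ℕ) : ℚ) / (D : ℚ)⌉ - r) ((n / D : ℕ) : ℤ),
          (∏ ℓ ∈ Finset.Icc 1 (r - 1), (j + (ℓ : ℤ))) *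
            (fa a D ((n : ℤ) - j * D).toNat : ℤ) := by
  intro n
  have hσpos : 0 < σ := by
    rw [hσ]
    haveI : Nonempty (Fin r) := ⟨⟨0, hr⟩⟩
    exact Finset.sum_pos (fun i _ => ha i) Finset.univ_nonempty
  have hC1 : (1 : ℤ) ≤ ⌈((n + σ : ℕ) : ℚ) / (D : ℚ)⌉ := by
    have h0 : (0 : ℚ) < ((n + σ : ℕ) : ℚ) / (D : ℚ) := by
      apply div_pos
      · exact_mod_cast Nat.lt_of_lt_of_le hσpos (Nat.le_add_left σ n)
      · exact_mod_cast hD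
    exact Int.ceil_pos.2 h0
  -- j * D ≤ n for all j in the interval
  have hjD : ∀ j : ℤ, j ∈ Finset.Icc (⌈((n + σ : ℕ) : ℚ) / (D : ℚ)⌉ - r) ((n / D : ℕ) : ℤ) →
      j * D ≤ (n : ℤ) := by
    intro j hj
    rw [Finset.mem_Icc] at hj
    rcases le_or_gt j 0 with h | h
    · have h1 : j * (D : ℤ) ≤ 0 :=
        mul_nonpos_of_nonpos_of_nonneg h (by positivity)
      have h2 : (0 : ℤ) ≤ n := Int.natCast_nonneg n
      linarith
    · have h1 : j * (D : ℤ) ≤ ((n / D : ℕ) : ℤ) * D :=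
        mul_le_mul_of_nonneg_right hj.2 (by positivity)
      have h2 : ((n / D : ℕ) : ℤ) * (D : ℤ) ≤ (n : ℤ) := by
        exact_mod_cast Nat.div_mul_le_self n D
      linarith
  refine ⟨fun j hj => by have := hjD j hj; omega, ?_⟩
  -- fa vanishes for large argument
  have hfa_zero : ∀ N : ℕ, (r : ℤ) * D < (N : ℤ) + σ → fa a D N = 0 := by
    intro N hN
    have he : IsEmpty {j : Fin r → ℕ // (∀ k, j k ≤ D / a k - 1) ∧ ∑ k, a k * j k = N} := by
      constructor
      rintro ⟨j, hb, hs⟩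
      have hterm : ∀ k, (a k : ℤ) * j k ≤ (D : ℤ) - a k := by
        intro k
        have hq0 : 0 < D / a k := Nat.div_pos (Nat.le_of_dvd hD (hdvd k)) (ha k)
        have haq : a k * (D / a k) = D := Nat.mul_div_cancel' (hdvd k)
        have h1 : (j k : ℤ) ≤ ((D / a k : ℕ) : ℤ) - 1 := by
          have := hb k
          omega
        have h2 : (a k : ℤ) * j k ≤ (a k : ℤ) * (((D / a k : ℕ) : ℤ) - 1) :=
          mul_le_mul_of_nonneg_left h1 (by positivity)
        have h3 : (a k : ℤ) * ((D / a k : ℕ) : ℤ) = D := by exact_mod_cast haq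
        rw [mul_sub, mul_one, h3] at h2
        linarith
      have hsum : (N : ℤ) ≤ (r : ℤ) * D - σ := by
        calc (N : ℤ) = ∑ k, (a k : ℤ) * j k := by exact_mod_cast hs.symm
          _ ≤ ∑ k : Fin r, ((D : ℤ) - a k) := Finset.sum_le_sum (fun k _ => hterm k)
          _ = (r : ℤ) * D - σ := by
            rw [Finset.sum_sub_distrib, Finset.sum_const, Finset.card_univ, Fintype.card_fin,
              nsmul_eq_mul, hσ]
            push_cast
            ring
      linarith
    calc fa a D N
        = Nat.card {j : Fin r → ℕ // (∀ k, j k ≤ D / a k - 1) ∧ ∑ k, a k * j k = N} := rfl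
      _ = 0 := @Nat.card_of_isEmpty _ he
  -- the int-term fa vanishes for 0 ≤ j < ⌈⌉ - r
  have hfa_int_zero : ∀ j : ℤ, 0 ≤ j → j ≤ ((n / D : ℕ) : ℤ) →
      j < ⌈((n + σ : ℕ) : ℚ) / (D : ℚ)⌉ - r →
      (fa a D ((n : ℤ) - j * D).toNat : ℤ) = 0 := by
    intro j h0 hU' hjC
    have hjDn : j * D ≤ (n : ℤ) := by
      have h1 : j * (D : ℤ) ≤ ((n / D : ℕ) : ℤ) * D :=
        mul_le_mul_of_nonneg_right hU' (by positivity)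
      have h2 : ((n / D : ℕ) : ℤ) * (D : ℤ) ≤ (n : ℤ) := by
        exact_mod_cast Nat.div_mul_le_self n D
      linarith
    have hNeq : ((((n : ℤ) - j * D).toNat : ℕ) : ℤ) = (n : ℤ) - j * D :=
      Int.toNat_of_nonneg (by linarith)
    have hlt : j + r < ⌈((n + σ : ℕ) : ℚ) / (D : ℚ)⌉ := by omega
    have hrat : (((j + r : ℤ)) : ℚ) < ((n + σ : ℕ) : ℚ) / (D : ℚ) := Int.lt_ceil.1 hlt
    have hD' : (0 : ℚ) < (D : ℚ) := by exact_mod_cast hD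
    have hq : (((j + r : ℤ)) : ℚ) * D < ((n + σ : ℕ) : ℚ) := (lt_div_iff₀ hD').1 hrat
    have hZ : (j + r) * (D : ℤ) < (n : ℤ) + σ := by exact_mod_cast hq
    have hexp : (j + r) * (D : ℤ) = j * D + r * D := by ring
    have : (r : ℤ) * D < ((((n : ℤ) - j * D).toNat : ℕ) : ℤ) + σ := by
      rw [hNeq]; linarith
    rw [hfa_zero _ this]
    simp
  -- reduce r to d + 1
  obtain ⟨d, rfl⟩ : ∃ d, r = d + 1 := ⟨r - 1, by omega⟩
  simp only [Nat.add_sub_cancel]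
  have hprod_zero : ∀ j : ℤ, 1 - ((d + 1 : ℕ) : ℤ) ≤ j → j < 0 →
      (∏ ℓ ∈ Finset.Icc 1 d, (j + (ℓ : ℤ))) = 0 := by
    intro j h1 h2
    refine Finset.prod_eq_zero (i := (-j).toNat) ?_ ?_
    · rw [Finset.mem_Icc]
      omega
    · omega
  -- the ℕ-level identity
  have hnat : d.factorial * restrictedPartition a n
      = ∑ m ∈ range (n / D + 1), (∏ ℓ ∈ Icc 1 d, (m + ℓ)) * fa a D (n - m * D) := by
    rw [key_count a ha D hD hdvd n, Finset.mul_sum]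
    refine Finset.sum_congr rfl fun m _ => ?_
    rw [cardFA d m, prodIcc d m]
    ring
  -- pass to ℤ and reindex
  have hreindex : (∑ m ∈ range (n / D + 1),
        (((∏ ℓ ∈ Icc 1 d, (m + ℓ)) * fa a D (n - m * D) : ℕ) : ℤ))
      = ∑ j ∈ Finset.Icc (0 : ℤ) ((n / D : ℕ) : ℤ),
          (∏ ℓ ∈ Finset.Icc 1 d, (j + (ℓ : ℤ))) *
            (fa a D ((n : ℤ) - j * D).toNat : ℤ) := by
    refine Finset.sum_nbij' (fun m => (m : ℤ)) (fun j => j.toNat) ?_ ?_ ?_ ?_ ?_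
    · intro m hm
      rw [Finset.mem_range] at hm
      show (m : ℤ) ∈ Finset.Icc (0 : ℤ) ((n / D : ℕ) : ℤ)
      rw [Finset.mem_Icc]
      exact ⟨by positivity, by exact_mod_cast (show m ≤ n / D by omega)⟩
    · intro j hj
      rw [Finset.mem_Icc] at hj
      show j.toNat ∈ range (n / D + 1)
      rw [Finset.mem_range]
      omega
    · intro m _
      simp
    · intro j hj
      rw [Finset.mem_Icc] at hj
      show ((j.toNat : ℕ) : ℤ) = j
      omega
    · intro m hm
      rw [Finset.mem_range] at hm
      have hmD : m * D ≤ n :=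
        le_trans (Nat.mul_le_mul_right D (by omega)) (Nat.div_mul_le_self n D)
      have harg : ((n : ℤ) - (m : ℤ) * D).toNat = n - m * D := by
        rw [show (n : ℤ) - (m : ℤ) * D = ((n - m * D : ℕ) : ℤ) by
          rw [Nat.cast_sub hmD, Nat.cast_mul]]
        exact Int.toNat_natCast _
      rw [harg]
      push_cast
      ring
  -- move between intervals
  have hstep : (∑ j ∈ Finset.Icc (⌈((n + σ : ℕ) : ℚ) / (D : ℚ)⌉ - ((d + 1 : ℕ) : ℤ))
        ((n / D : ℕ) : ℤ),
          (∏ ℓ ∈ Finset.Icc 1 d, (j + (ℓ : ℤ))) * (fa a D ((n : ℤ) - j * D).toNat : ℤ))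
      = ∑ j ∈ Finset.Icc (0 : ℤ) ((n / D : ℕ) : ℤ),
          (∏ ℓ ∈ Finset.Icc 1 d, (j + (ℓ : ℤ))) * (fa a D ((n : ℤ) - j * D).toNat : ℤ) := by
    rcases le_or_gt (⌈((n + σ : ℕ) : ℚ) / (D : ℚ)⌉ - ((d + 1 : ℕ) : ℤ)) 0 with h | h
    · refine (Finset.sum_subset (Finset.Icc_subset_Icc_left h) ?_).symm
      intro x hx hx'
      rw [Finset.mem_Icc] at hx
      have hxneg : x < 0 := by
        by_contra hc
        exact hx' (Finset.mem_Icc.2 ⟨by omega, hx.2⟩)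
      rw [hprod_zero x (by omega) hxneg, zero_mul]
    · refine Finset.sum_subset (Finset.Icc_subset_Icc_left (by omega)) ?_
      intro x hx hx'
      rw [Finset.mem_Icc] at hx
      have hxlt : x < ⌈((n + σ : ℕ) : ℚ) / (D : ℚ)⌉ - ((d + 1 : ℕ) : ℤ) := by
        by_contra hc
        exact hx' (Finset.mem_Icc.2 ⟨by omega, hx.2⟩)
      rw [hfa_int_zero x hx.1 hx.2 hxlt, mul_zero]
  rw [hstep, ← hreindex]
  exact_mod_cast congrArg (Nat.cast : ℕ → ℤ) hnat
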